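/- Fix k ≥ 0, n = k+2, and γ ∈ (0,1]. Define the linear operator T : ℝⁿ → ℝⁿ by (T U)_1 = γ U_1, (T U)_2 = 1 + γ U_1, and (T U)_j = γ U_{j-1} for 3 ≤ j ≤ n. Then U* = (0, 1, γ, γ², ..., γ^{n-2}) is a fixed point of T, and for any sequence U^0 = 0, U^1, ..., U^k in ℝⁿ satisfying the span condition U^i ∈ span{T U^0 - U^0, ..., T U^{i-1} - U^{i-1}} for 1 ≤ i ≤ k, one has ‖T U^k - U^k‖_∞ ≥ γ^k / (∑_{i=0}^k γ^i). -/

import Mathlib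

theorem stmt_12 (k : ℕ) (γ : ℝ) (hγ0 : 0 < γ) (hγ1 : γ ≤ 1)
    (T : (Fin (k+2) → ℝ) → (Fin (k+2) → ℝ))
    (hT : ∀ (U : Fin (k+2) → ℝ) (j : Fin (k+2)),
      T U j = if j.1 = 0 then γ * U 0
              else if j.1 = 1 then 1 + γ * U 0
              else γ * U ⟨j.1 - 1, lt_of_le_of_lt (Nat.sub_le _ _) j.isLt⟩)
    (Ustar : Fin (k+2) → ℝ)
    (hUstar : ∀ j : Fin (k+2), Ustar j = if j.1 = 0 then 0 else γ^(j.1 - 1)) :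
    T Ustar = Ustar ∧
    ∀ U : ℕ → (Fin (k+2) → ℝ), U 0 = 0 →
      (∀ i : ℕ, 1 ≤ i → i ≤ k →
        U i ∈ Submodule.span ℝ {v : Fin (k+2) → ℝ | ∃ l < i, v = T (U l) - U l}) →
      γ^k / (∑ i ∈ Finset.range (k+1), γ^i) ≤ ‖T (U k) - U k‖ := by
  have hU0star : Ustar 0 = 0 := by rw [hUstar]; simp
  constructor
  · funext j
    rw [hT, hUstar j]
    rcases j with ⟨j, hj⟩
    simp only
    by_cases h0 : j = 0
    · simp [h0, hU0star]
    by_cases h1 : j = 1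
    · simp [h0, h1, hU0star]
    · rw [if_neg h0, if_neg h1, if_neg h0, hUstar]
      simp only
      rw [if_neg (by omega : ¬ (j - 1 = 0)), ← pow_succ']
      congr 1
      omega
  · intro U hU0 hspan
    -- support lemma
    have hsupp : ∀ i, i ≤ k → ∀ j : Fin (k+2), (j.1 = 0 ∨ i < j.1) → U i j = 0 := by
      intro i
      induction i using Nat.strong_induction_on with
      | _ i IH =>
        intro hik j hj
        rcases Nat.eq_zero_or_pos i with rfl | hi
        · rw [hU0]; rfl
        · have hmem := hspan i hi hik
          let Z : Submodule ℝ (Fin (k+2) → ℝ) :=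
            { carrier := {f | ∀ j : Fin (k+2), (j.1 = 0 ∨ i < j.1) → f j = 0}
              add_mem' := fun ha hb j hj => by
                simp only [Pi.add_apply, ha j hj, hb j hj, add_zero]
              zero_mem' := fun j hj => rfl
              smul_mem' := fun c a ha j hj => by
                simp only [Pi.smul_apply, ha j hj, smul_zero] }
          have hZ : Submodule.span ℝ {v : Fin (k+2) → ℝ | ∃ l < i, v = T (U l) - U l} ≤ Z := by
            apply Submodule.span_le.mpr
            rintro v ⟨l, hl, rfl⟩
            intro j' hj'
            have hlk : l ≤ k := by omega
            have hUl0 : U l 0 = 0 := IH l hl hlk 0 (Or.inl rfl)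
            rcases hj' with h0 | hgt
            · have hj0 : j' = 0 := Fin.ext (by simpa using h0)
              rw [Pi.sub_apply, hT, if_pos h0, hUl0, hj0, hUl0, mul_zero, sub_zero]
            · have hne0 : ¬ (j'.1 = 0) := by omega
              have hne1 : ¬ (j'.1 = 1) := by omega
              rw [Pi.sub_apply, hT, if_neg hne0, if_neg hne1]
              have e1 : U l ⟨j'.1 - 1, lt_of_le_of_lt (Nat.sub_le _ _) j'.isLt⟩ = 0 :=
                IH l hl hlk _ (Or.inr (by simp; omega))
              have e2 : U l j' = 0 := IH l hl hlk _ (Or.inr (by omega))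
              rw [e1, e2, mul_zero, sub_zero]
          exact hZ hmem j hj
    -- abbreviations
    set r : Fin (k+2) → ℝ := T (U k) - U k with hrdef
    set R : ℕ → ℝ := fun j => if h : j + 1 < k + 2 then r ⟨j+1, h⟩ else 0 with hRdef
    set V : ℕ → ℝ := fun m => if h : m < k + 2 then U k ⟨m, h⟩ else 0 with hVdef
    have hV0 : V 0 = 0 := by
      simp only [hVdef, dif_pos (by omega : (0:ℕ) < k+2)]
      exact hsupp k le_rfl _ (Or.inl rfl)
    have hVtop : V (k+1) = 0 := by
      simp only [hVdef, dif_pos (by omega : k+1 < k+2)]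
      exact hsupp k le_rfl _ (Or.inr (by simp))
    have hRform : ∀ j, j ≤ k → R j = (if j = 0 then 1 else 0) + (γ * V j - V (j+1)) := by
      intro j hjk
      have hj1 : j + 1 < k + 2 := by omega
      simp only [hRdef, dif_pos hj1, hrdef, Pi.sub_apply, hT]
      have hVj : V j = U k ⟨j, by omega⟩ := by simp only [hVdef, dif_pos (by omega : j < k+2)]
      have hVj1 : V (j+1) = U k ⟨j+1, hj1⟩ := by simp only [hVdef, dif_pos hj1]
      rcases Nat.eq_zero_or_pos j with rfl | hjpos
      · have hU0' : U k 0 = 0 := hsupp k le_rfl 0 (Or.inl rfl)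
        simp only [show ((⟨0+1, hj1⟩ : Fin (k+2)) : ℕ) = 1 from rfl, hU0', ← hVj1, hV0]
        norm_num
        ring
      · rw [if_neg (by simp : ¬ (((⟨j+1, hj1⟩ : Fin (k+2)) : ℕ) = 0)),
          if_neg (by simp; omega : ¬ (((⟨j+1, hj1⟩ : Fin (k+2)) : ℕ) = 1)),
          if_neg (by omega : ¬ j = 0), hVj, hVj1]
        have : (⟨((⟨j+1, hj1⟩ : Fin (k+2)) : ℕ) - 1, lt_of_le_of_lt (Nat.sub_le _ _) (⟨j+1, hj1⟩ : Fin (k+2)).isLt⟩ : Fin (k+2)) = ⟨j, by omega⟩ := by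
          apply Fin.ext; simp
        rw [this]
        ring
    have hRbound : ∀ j, j ≤ k → |R j| ≤ ‖r‖ := by
      intro j hjk
      have hj1 : j + 1 < k + 2 := by omega
      simp only [hRdef, dif_pos hj1]
      exact norm_le_pi_norm r ⟨j+1, hj1⟩
    -- key telescoping identity
    have key : ∑ j ∈ Finset.range (k+1), γ^(k-j) * R j = γ^k := by
      have step : ∀ j ∈ Finset.range (k+1),
          γ^(k-j) * R j = (if j = 0 then γ^k else 0)
            + (γ^(k+1-j) * V j - γ^(k+1-(j+1)) * V (j+1)) := by
        intro j hjmem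
        have hjk : j ≤ k := by simpa [Nat.lt_succ_iff] using Finset.mem_range.mp hjmem
        rw [hRform j hjk]
        have e1 : γ^(k-j) * γ = γ^(k+1-j) := by
          rw [← pow_succ]; congr 1; omega
        have e2 : k+1-(j+1) = k-j := by omega
        rcases Nat.eq_zero_or_pos j with rfl | hjpos
        · rw [if_pos rfl, if_pos rfl, e2, ← e1]
          simp only [Nat.sub_zero]
          ring
        · rw [if_neg (by omega : ¬ j = 0), if_neg (by omega : ¬ j = 0), e2, ← e1]
          ring
      rw [Finset.sum_congr rfl step, Finset.sum_add_distrib,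
        Finset.sum_range_sub' (fun j => γ^(k+1-j) * V j) (k+1)]
      rw [Finset.sum_ite_eq' (Finset.range (k+1)) 0 (fun _ => γ^k)]
      simp [hV0, hVtop]
    -- sum of weights
    have hS : ∑ j ∈ Finset.range (k+1), γ^(k-j) = ∑ i ∈ Finset.range (k+1), γ^i := by
      have := Finset.sum_range_reflect (fun i => γ^i) (k+1)
      simpa using this
    have hSpos : 0 < ∑ i ∈ Finset.range (k+1), γ^i :=
      Finset.sum_pos (fun i _ => pow_pos hγ0 i) ⟨0, Finset.mem_range.mpr (by omega)⟩
    have hbound : γ^k ≤ (∑ i ∈ Finset.range (k+1), γ^i) * ‖r‖ := by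
      calc γ^k = ∑ j ∈ Finset.range (k+1), γ^(k-j) * R j := key.symm
        _ ≤ |∑ j ∈ Finset.range (k+1), γ^(k-j) * R j| := le_abs_self _
        _ ≤ ∑ j ∈ Finset.range (k+1), |γ^(k-j) * R j| := Finset.abs_sum_le_sum_abs _ _
        _ ≤ ∑ j ∈ Finset.range (k+1), γ^(k-j) * ‖r‖ := by
            apply Finset.sum_le_sum
            intro j hjmem
            have hjk : j ≤ k := by simpa [Nat.lt_succ_iff] using Finset.mem_range.mp hjmem
            rw [abs_mul, abs_of_nonneg (pow_nonneg hγ0.le _)]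
            exact mul_le_mul_of_nonneg_left (hRbound j hjk) (pow_nonneg hγ0.le _)
        _ = (∑ j ∈ Finset.range (k+1), γ^(k-j)) * ‖r‖ := by rw [Finset.sum_mul]
        _ = (∑ i ∈ Finset.range (k+1), γ^i) * ‖r‖ := by rw [hS]
    rw [div_le_iff₀ hSpos]
    linarith [hbound]
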